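/- In the MDP of Example 5.1 with cost c(x,a) = -1 for x ≥ 1 and c(0,a) = 0, the optimal value is v*(1) = -4, but the stationary strategy φ(x) ≡ 2 achieves only v^φ(1) = -Σ_{t=0}^∞ (1/2)^t = -2. -/

import Mathlib

/-- Transition kernel of the MDP of Example 5.1 on state space `ℕ` with actions `{1,2}`:
`0` is absorbing; action `1`: `p(0|x,1) = 2^{-x}`, `p(x|x,1) = 1 - 2^{-x}`;
action `2`: `p(0|x,2) = 1/2`, `p(x+1|x,2) = 1/2`. -/
noncomputable def Pkernel (a x y : ℕ) : ℝ :=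
  if x = 0 then (if y = 0 then 1 else 0)
  else if a = 1 then
    (if y = 0 then (1/2 : ℝ)^x else if y = x then 1 - (1/2 : ℝ)^x else 0)
  else (if y = 0 then (1/2 : ℝ) else if y = x + 1 then (1/2 : ℝ) else 0)

/-- A history is a list of (action, resulting state) pairs, most recent first.
`curState x₀ h` is the current state after history `h` starting from `x₀`. -/
def curState (x₀ : ℕ) : List (ℕ × ℕ) → ℕ
  | [] => x₀
  | (_, y) :: _ => y

/-- A (randomized, history-dependent) strategy assigns to the initial state and a history
a probability distribution over actions; `σ x₀ h a` is the probability of action `a`. -/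
def IsStrategy (σ : ℕ → List (ℕ × ℕ) → ℕ → ℝ) : Prop :=
  ∀ x₀ h, (∀ a, 0 ≤ σ x₀ h a) ∧ σ x₀ h 1 + σ x₀ h 2 = 1
    ∧ ∀ a, a ≠ 1 → a ≠ 2 → σ x₀ h a = 0

/-- Probability that the controlled process under `σ` started at `x₀` realizes the
trajectory recorded by the history `h` (most recent pair first). -/
noncomputable def trajProb (σ : ℕ → List (ℕ × ℕ) → ℕ → ℝ) (x₀ : ℕ) :
    List (ℕ × ℕ) → ℝ
  | [] => 1
  | (a, y) :: h => trajProb σ x₀ h * σ x₀ h a * Pkernel a (curState x₀ h) y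

/-- `Pne σ x₀ t`: probability that under strategy `σ` started at `x₀` the state at time `t`
is nonzero, i.e. `P^σ_{x₀}(X_t ≠ 0) = P^σ_{x₀}(T₀ > t)`. -/
noncomputable def Pne (σ : ℕ → List (ℕ × ℕ) → ℕ → ℝ) (x₀ t : ℕ) : ℝ :=
  ∑' h : {h : List (ℕ × ℕ) // h.length = t ∧ curState x₀ h ≠ 0}, trajProb σ x₀ h.1

/-- Expected hitting time of `0`: `E^σ_{x₀}[T₀] = ∑_{t=0}^∞ P^σ_{x₀}(T₀ > t)`. -/
noncomputable def hittingE (σ : ℕ → List (ℕ × ℕ) → ℕ → ℝ) (x₀ : ℕ) : ℝ :=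
  ∑' t : ℕ, Pne σ x₀ t

/-- Total expected cost `v^σ(x₀) = E^σ_{x₀}[∑_{t=1}^∞ c(X_{t-1}, A_t)]` for the cost
`c(x,a) = -1` for `x ≥ 1`, `c(0,a) = 0`: it equals `∑_{t=0}^∞ (-P^σ_{x₀}(X_t ≠ 0))`. -/
noncomputable def costValue (σ : ℕ → List (ℕ × ℕ) → ℕ → ℝ) (x₀ : ℕ) : ℝ :=
  ∑' t : ℕ, -(Pne σ x₀ t)

/-- The stationary strategy `φ(x) ≡ 2`, always taking action `2`. -/
noncomputable def sigma2 : ℕ → List (ℕ × ℕ) → ℕ → ℝ :=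
  fun _ _ a => if a = 2 then 1 else 0

@[simp] lemma curState_cons (x₀ a y : ℕ) (h : List (ℕ × ℕ)) :
    curState x₀ ((a, y) :: h) = y := rfl

lemma trajProb_cons (σ : ℕ → List (ℕ × ℕ) → ℕ → ℝ) (x₀ a y : ℕ) (h : List (ℕ × ℕ)) :
    trajProb σ x₀ ((a, y) :: h) = trajProb σ x₀ h * σ x₀ h a * Pkernel a (curState x₀ h) y := rfl

lemma half_pow_le_one {x : ℕ} : ((1:ℝ)/2)^x ≤ 1 :=
  pow_le_one₀ (by norm_num) (by norm_num)

lemma Pkernel_nonneg (a x y : ℕ) : 0 ≤ Pkernel a x y := by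
  unfold Pkernel
  split_ifs <;> [norm_num; norm_num; positivity; linarith [half_pow_le_one (x := x)];
    norm_num; norm_num; norm_num; norm_num]

lemma trajProb_nonneg {σ : ℕ → List (ℕ × ℕ) → ℕ → ℝ} (hσ : IsStrategy σ) (x₀ : ℕ) :
    ∀ h, 0 ≤ trajProb σ x₀ h
  | [] => by simp [trajProb]
  | (a, y) :: h => by
      have := trajProb_nonneg hσ x₀ h
      have h1 := (hσ x₀ h).1 a
      have h2 := Pkernel_nonneg a (curState x₀ h) y
      simp only [trajProb]
      positivity

section Det

variable (d : List (ℕ × ℕ) → ℕ)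

noncomputable def sigD : ℕ → List (ℕ × ℕ) → ℕ → ℝ := fun _ h a => if a = d h then 1 else 0

lemma isStrategy_sigD (hd : ∀ h, d h = 1 ∨ d h = 2) : IsStrategy (sigD d) := by
  intro x₀ h
  refine ⟨fun a => by unfold sigD; split_ifs <;> norm_num, ?_, fun a h1 h2 => ?_⟩
  · rcases hd h with h' | h' <;> simp [sigD, h']
  · unfold sigD
    rcases hd h with h' | h' <;> rw [h'] <;> simp [h1, h2]

def nextS (x a : ℕ) : ℕ := if a = 2 then x + 1 else x

def hist : ℕ → List (ℕ × ℕ)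
  | 0 => []
  | t + 1 => (d (hist t), nextS (curState 1 (hist t)) (d (hist t))) :: hist t

lemma hist_length : ∀ t, (hist d t).length = t
  | 0 => rfl
  | t + 1 => by simp [hist, hist_length t]

lemma cur_hist_pos : ∀ t, 1 ≤ curState 1 (hist d t)
  | 0 => le_refl 1
  | t + 1 => by
      have := cur_hist_pos t
      simp only [hist, curState_cons, nextS]
      split_ifs <;> omega

lemma support_lemma (hd : ∀ h, d h = 1 ∨ d h = 2) :
    ∀ (h : List (ℕ × ℕ)), curState 1 h ≠ 0 → trajProb (sigD d) 1 h ≠ 0 →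
      h = hist d h.length := by
  intro h
  induction h with
  | nil => intro _ _; rfl
  | cons p h ih =>
    obtain ⟨a, y⟩ := p
    intro hcur htp
    simp only [trajProb] at htp
    have htp' : trajProb (sigD d) 1 h ≠ 0 := fun hh => by simp [hh] at htp
    have hsig : sigD d 1 h a ≠ 0 := fun hh => by simp [hh] at htp
    have hP : Pkernel a (curState 1 h) y ≠ 0 := fun hh => by simp [hh] at htp
    have hy : y ≠ 0 := by simpa [curState] using hcur
    have hcurh : curState 1 h ≠ 0 := by
      intro hc
      rw [Pkernel, if_pos hc, if_neg hy] at hP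
      exact hP rfl
    have hh := ih hcurh htp'
    have ha : a = d h := by
      by_contra hc
      simp [sigD, hc] at hsig
    -- determine y
    have hy' : y = nextS (curState 1 h) a := by
      rw [Pkernel, if_neg hcurh] at hP
      rcases hd h with h1 | h1
      · rw [← ha] at h1
        rw [if_pos h1, if_neg hy] at hP
        have h2 : y = curState 1 h := by
          by_contra h2
          rw [if_neg h2] at hP
          exact hP rfl
        simp [nextS, h1, h2]
      · have ha1 : a ≠ 1 := by rw [ha, h1]; omega
        rw [if_neg ha1, if_neg hy] at hP
        have h2 : y = curState 1 h + 1 := by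
          by_contra h2
          rw [if_neg h2] at hP
          exact hP rfl
        rw [← ha] at h1
        simp [nextS, h1, h2]
    simp only [List.length_cons, hist, ← hh]
    rw [← ha, ← hy']

lemma Pne_sigD (hd : ∀ h, d h = 1 ∨ d h = 2) (t : ℕ) :
    Pne (sigD d) 1 t = trajProb (sigD d) 1 (hist d t) := by
  have hmem : (hist d t).length = t ∧ curState 1 (hist d t) ≠ 0 :=
    ⟨hist_length d t, by have := cur_hist_pos d t; omega⟩
  rw [Pne, tsum_eq_single (⟨hist d t, hmem⟩ :
      {h : List (ℕ × ℕ) // h.length = t ∧ curState 1 h ≠ 0})]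
  intro ⟨h, hlen, hcur⟩ hne
  by_contra hc
  apply hne
  ext1
  simp only
  rw [support_lemma d hd h hcur hc, hlen]

lemma trajProb_hist_succ (hd : ∀ h, d h = 1 ∨ d h = 2) (t : ℕ) :
    trajProb (sigD d) 1 (hist d (t + 1)) = trajProb (sigD d) 1 (hist d t) *
      (if d (hist d t) = 2 then (1/2 : ℝ)
        else 1 - (1/2 : ℝ) ^ (curState 1 (hist d t))) := by
  have hpos := cur_hist_pos d t
  have hx0 : curState 1 (hist d t) ≠ 0 := by omega
  rw [hist, trajProb_cons]
  have hsig : sigD d 1 (hist d t) (d (hist d t)) = 1 := by simp [sigD]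
  rw [hsig, mul_one]
  congr 1
  rcases hd (hist d t) with h1 | h1
  · rw [h1]
    simp only [nextS, Pkernel, if_neg hx0, if_pos rfl]
    norm_num
    exact fun h => absurd h hx0
  · rw [h1]
    simp only [nextS, Pkernel, if_neg hx0, if_pos rfl]
    norm_num [hx0]

end Det

section Sigma2

def d2 : List (ℕ × ℕ) → ℕ := fun _ => 2

lemma hd2 : ∀ h, d2 h = 1 ∨ d2 h = 2 := fun _ => Or.inr rfl

lemma sigma2_eq : sigma2 = sigD d2 := rfl

lemma trajProb_hist_d2 : ∀ t, trajProb (sigD d2) 1 (hist d2 t) = (1/2 : ℝ)^t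
  | 0 => by simp [hist, trajProb]
  | t + 1 => by
      rw [trajProb_hist_succ d2 hd2 t, trajProb_hist_d2 t]
      simp [d2]
      ring

lemma Pne_sigma2 (t : ℕ) : Pne sigma2 1 t = (1/2 : ℝ)^t := by
  rw [sigma2_eq, Pne_sigD d2 hd2 t, trajProb_hist_d2 t]

lemma costValue_sigma2 : costValue sigma2 1 = -∑' t : ℕ, (1/2 : ℝ)^t := by
  rw [costValue]
  rw [show (fun t : ℕ => -(Pne sigma2 1 t)) = fun t : ℕ => -((1/2 : ℝ)^t) from
    funext fun t => by rw [Pne_sigma2]]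
  exact tsum_neg

lemma costValue_sigma2' : costValue sigma2 1 = -2 := by
  rw [costValue_sigma2, tsum_geometric_of_lt_one (by norm_num) (by norm_num)]
  norm_num

end Sigma2

section SigmaN

def dN (N : ℕ) : List (ℕ × ℕ) → ℕ := fun h => if h.length < N then 2 else 1

lemma hdN (N : ℕ) : ∀ h, dN N h = 1 ∨ dN N h = 2 := by
  intro h; unfold dN; split_ifs <;> simp

lemma dN_hist (N t : ℕ) : dN N (hist (dN N) t) = if t < N then 2 else 1 := by
  rw [dN]; rw [hist_length]

lemma cur_hist_dN (N : ℕ) : ∀ t, curState 1 (hist (dN N) t) = min t N + 1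
  | 0 => by simp [hist, curState]
  | t + 1 => by
      have ih := cur_hist_dN N t
      show curState 1 ((_, nextS _ _) :: _) = _
      rw [curState_cons, nextS, dN_hist, ih]
      split_ifs with h <;> omega

lemma trajProb_hist_dN_le (N : ℕ) : ∀ t, t ≤ N →
    trajProb (sigD (dN N)) 1 (hist (dN N) t) = (1/2 : ℝ)^t
  | 0, _ => by simp [hist, trajProb]
  | t + 1, ht => by
      rw [trajProb_hist_succ (dN N) (hdN N) t, trajProb_hist_dN_le N t (by omega),
        dN_hist, if_pos (by omega : t < N)]
      norm_num
      ring

lemma trajProb_hist_dN_ge (N : ℕ) : ∀ k,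
    trajProb (sigD (dN N)) 1 (hist (dN N) (N + k))
      = (1/2 : ℝ)^N * (1 - (1/2 : ℝ)^(N+1))^k
  | 0 => by rw [show N + 0 = N from rfl, trajProb_hist_dN_le N N le_rfl]; simp
  | k + 1 => by
      rw [show N + (k + 1) = (N + k) + 1 from rfl,
        trajProb_hist_succ (dN N) (hdN N) (N + k), trajProb_hist_dN_ge N k,
        dN_hist, if_neg (by omega : ¬ N + k < N), cur_hist_dN,
        min_eq_right (by omega : N ≤ N + k)]
      norm_num
      ring

lemma Pne_dN_ge (N k : ℕ) :
    Pne (sigD (dN N)) 1 (k + N) = (1/2 : ℝ)^N * (1 - (1/2 : ℝ)^(N+1))^k := by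
  rw [Pne_sigD (dN N) (hdN N), show k + N = N + k from by omega, trajProb_hist_dN_ge]

lemma r_nonneg (N : ℕ) : (0:ℝ) ≤ 1 - (1/2 : ℝ)^(N+1) := by
  have := half_pow_le_one (x := N + 1); linarith

lemma r_lt_one (N : ℕ) : (1 - (1/2 : ℝ)^(N+1)) < 1 := by
  have : (0:ℝ) < (1/2 : ℝ)^(N+1) := by positivity
  linarith

lemma summable_Pne_dN (N : ℕ) : Summable (fun t => Pne (sigD (dN N)) 1 t) := by
  rw [← summable_nat_add_iff N]
  apply Summable.congr ((summable_geometric_of_lt_one (r_nonneg N) (r_lt_one N)).mul_left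
    ((1/2 : ℝ)^N))
  intro k
  rw [Pne_dN_ge]

lemma costValue_dN (N : ℕ) : costValue (sigD (dN N)) 1 = -4 + 2 * (1/2 : ℝ)^N := by
  rw [costValue, tsum_neg, ← Summable.sum_add_tsum_nat_add N (summable_Pne_dN N)]
  have h1 : ∑ t ∈ Finset.range N, Pne (sigD (dN N)) 1 t
      = ∑ t ∈ Finset.range N, (1/2 : ℝ)^t := by
    apply Finset.sum_congr rfl
    intro t ht
    rw [Finset.mem_range] at ht
    rw [Pne_sigD (dN N) (hdN N), trajProb_hist_dN_le N t (by omega)]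
  have h2 : ∑' k : ℕ, Pne (sigD (dN N)) 1 (k + N)
      = (1/2 : ℝ)^N * (1 - (1 - (1/2 : ℝ)^(N+1)))⁻¹ := by
    rw [show (fun k : ℕ => Pne (sigD (dN N)) 1 (k + N))
        = fun k : ℕ => (1/2 : ℝ)^N * (1 - (1/2 : ℝ)^(N+1))^k from
      funext fun k => Pne_dN_ge N k]
    rw [tsum_mul_left, tsum_geometric_of_lt_one (r_nonneg N) (r_lt_one N)]
  rw [h1, h2, geom_sum_eq (by norm_num) N]
  have hp : ((1/2 : ℝ))^(N+1) = (1/2) * (1/2)^N := by ring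
  rw [hp]
  have hne : ((1/2 : ℝ))^N ≠ 0 := by positivity
  field_simp
  ring

end SigmaN

section UpperBound

open ENNReal

variable (σ : ℕ → List (ℕ × ℕ) → ℕ → ℝ)

noncomputable def eT (h : List (ℕ × ℕ)) : ℝ≥0∞ := ENNReal.ofReal (trajProb σ 1 h)

noncomputable def gW : ℕ → ℝ≥0∞ := fun x => if x = 0 then 0 else ENNReal.ofReal (2 + 2^x : ℝ)

noncomputable def gInd : ℕ → ℝ≥0∞ := fun x => if x = 0 then 0 else 1

noncomputable def Phi (t : ℕ) (g : ℕ → ℝ≥0∞) : ℝ≥0∞ :=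
  ∑' h : {h : List (ℕ × ℕ) // h.length = t}, eT σ h.1 * g (curState 1 h.1)

def consEquiv (t : ℕ) :
    {h : List (ℕ × ℕ) // h.length = t + 1} ≃ (ℕ × ℕ) × {h : List (ℕ × ℕ) // h.length = t} where
  toFun := fun x => match x with
    | ⟨[], hl⟩ => absurd hl (by simp)
    | ⟨p :: h, hl⟩ => (p, ⟨h, by simpa using hl⟩)
  invFun := fun x => ⟨x.1 :: x.2.1, by simp [x.2.2]⟩
  left_inv := fun x => match x with
    | ⟨[], hl⟩ => absurd hl (by simp)
    | ⟨p :: h, hl⟩ => rfl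
  right_inv := fun ⟨p, h, hl⟩ => rfl

lemma tsum_pair_aux (c : ℝ≥0∞) (F : ℕ → ℝ≥0∞) (G : ℕ → ℕ → ℝ≥0∞) :
    ∑' ay : ℕ × ℕ, c * (F ay.1 * G ay.1 ay.2) = c * ∑' a : ℕ, F a * ∑' y : ℕ, G a y := by
  rw [ENNReal.tsum_prod (f := fun a y => c * (F a * G a y)), ← ENNReal.tsum_mul_left]
  apply tsum_congr; intro a
  rw [← ENNReal.tsum_mul_left, ← ENNReal.tsum_mul_left]

lemma Phi_succ (hσ : IsStrategy σ) (t : ℕ) (g : ℕ → ℝ≥0∞) :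
    Phi σ (t + 1) g = ∑' h : {h : List (ℕ × ℕ) // h.length = t},
      eT σ h.1 * (∑' a : ℕ, ENNReal.ofReal (σ 1 h.1 a)
        * ∑' y : ℕ, ENNReal.ofReal (Pkernel a (curState 1 h.1) y) * g y) := by
  rw [Phi, ← ((consEquiv t).symm.tsum_eq
    (fun h : {h : List (ℕ × ℕ) // h.length = t + 1} => eT σ h.1 * g (curState 1 h.1)))]
  have hform : ∀ p : (ℕ × ℕ) × {h : List (ℕ × ℕ) // h.length = t},
      eT σ ((consEquiv t).symm p).1 * g (curState 1 ((consEquiv t).symm p).1)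
        = eT σ p.2.1 * (ENNReal.ofReal (σ 1 p.2.1 p.1.1)
            * (ENNReal.ofReal (Pkernel p.1.1 (curState 1 p.2.1) p.1.2) * g p.1.2)) := by
    rintro ⟨⟨a, y⟩, h, hl⟩
    show eT σ ((a, y) :: h) * g (curState 1 ((a, y) :: h)) = _
    rw [curState_cons, eT, trajProb_cons,
      ENNReal.ofReal_mul (mul_nonneg (trajProb_nonneg hσ 1 h) ((hσ 1 h).1 a)),
      ENNReal.ofReal_mul (trajProb_nonneg hσ 1 h)]
    show ENNReal.ofReal (trajProb σ 1 h) * _ * _ * g y = _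
    rw [eT]
    ring
  rw [tsum_congr hform]
  rw [ENNReal.tsum_prod
    (f := fun (ay : ℕ × ℕ) (h : {h : List (ℕ × ℕ) // h.length = t}) =>
      eT σ h.1 * (ENNReal.ofReal (σ 1 h.1 ay.1)
        * (ENNReal.ofReal (Pkernel ay.1 (curState 1 h.1) ay.2) * g ay.2))),
    ENNReal.tsum_comm]
  apply tsum_congr; intro h
  exact tsum_pair_aux (eT σ h.1) (fun a => ENNReal.ofReal (σ 1 h.1 a))
    (fun a y => ENNReal.ofReal (Pkernel a (curState 1 h.1) y) * g y)

lemma gW_zero : gW 0 = 0 := rfl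

lemma tsum_actions (hσ : IsStrategy σ) (h : List (ℕ × ℕ)) (c : ℕ → ℝ≥0∞) :
    ∑' a : ℕ, ENNReal.ofReal (σ 1 h a) * c a
      = ENNReal.ofReal (σ 1 h 1) * c 1 + ENNReal.ofReal (σ 1 h 2) * c 2 := by
  rw [tsum_eq_sum (s := {1, 2}) ?_, Finset.sum_pair (by norm_num : (1:ℕ) ≠ 2)]
  intro a ha
  simp only [Finset.mem_insert, Finset.mem_singleton] at ha
  push_neg at ha
  rw [(hσ 1 h).2.2 a ha.1 ha.2]
  simp

lemma tsum_P0 (a : ℕ) (g : ℕ → ℝ≥0∞) (hg0 : g 0 = 0) :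
    ∑' y : ℕ, ENNReal.ofReal (Pkernel a 0 y) * g y = 0 := by
  have : ∀ y : ℕ, ENNReal.ofReal (Pkernel a 0 y) * g y = 0 := by
    intro y
    by_cases hy : y = 0
    · rw [hy, hg0, mul_zero]
    · rw [Pkernel, if_pos rfl, if_neg hy]
      simp
  rw [tsum_congr this, tsum_zero]

lemma tsum_P1 {x : ℕ} (hx : x ≠ 0) (g : ℕ → ℝ≥0∞) (hg0 : g 0 = 0) :
    ∑' y : ℕ, ENNReal.ofReal (Pkernel 1 x y) * g y
      = ENNReal.ofReal (1 - (1/2 : ℝ)^x) * g x := by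
  rw [tsum_eq_sum (s := {0, x}) ?_, Finset.sum_pair (by omega : (0:ℕ) ≠ x)]
  · rw [hg0, mul_zero, zero_add, Pkernel, if_neg hx, if_pos rfl, if_neg hx, if_pos rfl]
  · intro y hy
    simp only [Finset.mem_insert, Finset.mem_singleton] at hy
    push_neg at hy
    rw [Pkernel, if_neg hx, if_pos rfl, if_neg hy.1, if_neg hy.2]
    simp

lemma tsum_P2 {x : ℕ} (hx : x ≠ 0) (g : ℕ → ℝ≥0∞) (hg0 : g 0 = 0) :
    ∑' y : ℕ, ENNReal.ofReal (Pkernel 2 x y) * g y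
      = ENNReal.ofReal (1/2 : ℝ) * g (x + 1) := by
  rw [tsum_eq_sum (s := {0, x + 1}) ?_, Finset.sum_pair (by omega : (0:ℕ) ≠ x + 1)]
  · rw [hg0, mul_zero, zero_add, Pkernel, if_neg hx,
      if_neg (by norm_num : (2:ℕ) ≠ 1), if_neg (by omega : x + 1 ≠ 0), if_pos rfl]
  · intro y hy
    simp only [Finset.mem_insert, Finset.mem_singleton] at hy
    push_neg at hy
    rw [Pkernel, if_neg hx, if_neg (by norm_num : (2:ℕ) ≠ 1), if_neg hy.1, if_neg hy.2]
    simp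

lemma step_bound (hσ : IsStrategy σ) (h : List (ℕ × ℕ)) (x : ℕ) :
    gInd x + ∑' a : ℕ, ENNReal.ofReal (σ 1 h a)
      * (∑' y : ℕ, ENNReal.ofReal (Pkernel a x y) * gW y) ≤ gW x := by
  by_cases hx : x = 0
  · subst hx
    have hz : ∀ a : ℕ, ENNReal.ofReal (σ 1 h a)
        * (∑' y : ℕ, ENNReal.ofReal (Pkernel a 0 y) * gW y) = 0 := by
      intro a; rw [tsum_P0 a gW gW_zero, mul_zero]
    rw [tsum_congr hz, tsum_zero, add_zero]
    simp [gInd, gW]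
  · rw [tsum_actions σ hσ h, tsum_P1 hx gW gW_zero, tsum_P2 hx gW gW_zero]
    simp only [gInd, gW, if_neg hx, if_neg (by omega : x + 1 ≠ 0)]
    obtain ⟨hnn, hsum, -⟩ := hσ 1 h
    have hσ1 := hnn 1
    have hσ2 := hnn 2
    have hp : (0:ℝ) ≤ (1/2 : ℝ)^x := by positivity
    have hp1 : (1/2 : ℝ)^x ≤ 1 := half_pow_le_one
    have hq : (0:ℝ) ≤ (2:ℝ)^x := by positivity
    have hpq : (1/2 : ℝ)^x * 2^x = 1 := by
      rw [← mul_pow]; norm_num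
    have h1n : (0:ℝ) ≤ σ 1 h 1 * ((1 - (1/2:ℝ)^x) * (2 + 2^x)) :=
      mul_nonneg hσ1 (mul_nonneg (by linarith) (by positivity))
    have h2n : (0:ℝ) ≤ σ 1 h 2 * ((1/2:ℝ) * (2 + 2^(x+1))) :=
      mul_nonneg hσ2 (by positivity)
    rw [← ENNReal.ofReal_mul (by linarith : (0:ℝ) ≤ 1 - (1/2:ℝ)^x),
      ← ENNReal.ofReal_mul hσ1,
      ← ENNReal.ofReal_mul (by norm_num : (0:ℝ) ≤ (1/2:ℝ)),
      ← ENNReal.ofReal_mul hσ2,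
      ← ENNReal.ofReal_add h1n h2n,
      ← ENNReal.ofReal_one,
      ← ENNReal.ofReal_add (by norm_num) (add_nonneg h1n h2n)]
    apply ENNReal.ofReal_le_ofReal
    have hq1 : (2:ℝ)^(x+1) = 2 * 2^x := by ring
    nlinarith [mul_nonneg hσ1 hp, mul_nonneg hσ2 hq]

noncomputable def Aen (t : ℕ) : ℝ≥0∞ := Phi σ t gInd
noncomputable def Wen (t : ℕ) : ℝ≥0∞ := Phi σ t gW

lemma step_main (hσ : IsStrategy σ) (t : ℕ) :
    Aen σ t + Wen σ (t + 1) ≤ Wen σ t := by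
  rw [Aen, Wen, Wen, Phi, Phi_succ σ hσ, Phi, ← ENNReal.tsum_add]
  apply ENNReal.tsum_le_tsum
  intro h
  rw [← mul_add]
  exact mul_le_mul_right (step_bound σ hσ h.1 (curState 1 h.1)) _

lemma W0 : Wen σ 0 = ENNReal.ofReal 4 := by
  rw [Wen, Phi, tsum_eq_single (⟨[], rfl⟩ : {h : List (ℕ × ℕ) // h.length = 0})]
  · show eT σ [] * gW (curState 1 []) = _
    rw [eT, show trajProb σ 1 [] = 1 from rfl, show curState 1 [] = 1 from rfl]
    simp only [gW, if_neg (by norm_num : (1:ℕ) ≠ 0)]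
    norm_num
  · rintro ⟨h, hl⟩ hne
    exact absurd (Subtype.ext (List.length_eq_zero_iff.mp hl)) hne

lemma partial_bound (hσ : IsStrategy σ) :
    ∀ t, (∑ s ∈ Finset.range t, Aen σ s) + Wen σ t ≤ ENNReal.ofReal 4
  | 0 => by rw [Finset.range_zero, Finset.sum_empty, zero_add, W0]
  | t + 1 => by
      calc (∑ s ∈ Finset.range (t+1), Aen σ s) + Wen σ (t+1)
          = (∑ s ∈ Finset.range t, Aen σ s) + (Aen σ t + Wen σ (t+1)) := by
            rw [Finset.sum_range_succ]; ring
        _ ≤ (∑ s ∈ Finset.range t, Aen σ s) + Wen σ t :=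
            add_le_add_right (step_main σ hσ t) _
        _ ≤ ENNReal.ofReal 4 := partial_bound hσ t

lemma tsum_A_le (hσ : IsStrategy σ) : ∑' t : ℕ, Aen σ t ≤ ENNReal.ofReal 4 :=
  Summable.tsum_le_of_sum_range_le ENNReal.summable fun n =>
    le_trans le_self_add (partial_bound σ hσ n)

lemma A_ne_top (hσ : IsStrategy σ) (t : ℕ) : Aen σ t ≠ ⊤ :=
  ne_top_of_le_ne_top ENNReal.ofReal_ne_top
    (le_trans (ENNReal.le_tsum t) (tsum_A_le σ hσ))

lemma Aen_eq (hσ : IsStrategy σ) (t : ℕ) :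
    Aen σ t = ∑' x : {h : List (ℕ × ℕ) // h.length = t ∧ curState 1 h ≠ 0}, eT σ x.1 := by
  rw [Aen, Phi]
  have hinj : Function.Injective
      (fun x : {h : List (ℕ × ℕ) // h.length = t ∧ curState 1 h ≠ 0} =>
        (⟨x.1, x.2.1⟩ : {h : List (ℕ × ℕ) // h.length = t})) := by
    intro x y hxy
    simp only [Subtype.mk.injEq] at hxy
    exact Subtype.ext hxy
  rw [← hinj.tsum_eq ?_]
  · apply tsum_congr
    rintro ⟨h, hl, hc⟩
    show eT σ h * gInd (curState 1 h) = eT σ h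
    simp only [gInd, if_neg hc, mul_one]
  · rintro ⟨h, hl⟩ hb
    have hc : curState 1 h ≠ 0 := by
      intro hc
      apply hb
      show eT σ h * gInd (curState 1 h) = 0
      simp [gInd, hc]
    exact ⟨⟨h, hl, hc⟩, rfl⟩

lemma Pne_eq_Aen (hσ : IsStrategy σ) (t : ℕ) : Pne σ 1 t = (Aen σ t).toReal := by
  have hrw := ENNReal.tsum_toReal_eq
    (f := fun x : {h : List (ℕ × ℕ) // h.length = t ∧ curState 1 h ≠ 0} => eT σ x.1)
    (fun x => by simp only [eT]; exact ENNReal.ofReal_ne_top)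
  rw [Aen_eq σ hσ t, hrw, Pne]
  apply tsum_congr
  intro x
  simp only [eT]
  rw [ENNReal.toReal_ofReal (trajProb_nonneg hσ 1 x.1)]

lemma costValue_ge (hσ : IsStrategy σ) : -4 ≤ costValue σ 1 := by
  have h1 : ∑' t : ℕ, Pne σ 1 t ≤ 4 := by
    rw [show (fun t : ℕ => Pne σ 1 t) = fun t : ℕ => (Aen σ t).toReal from
      funext fun t => Pne_eq_Aen σ hσ t]
    rw [← ENNReal.tsum_toReal_eq (A_ne_top σ hσ)]
    have := ENNReal.toReal_mono ENNReal.ofReal_ne_top (tsum_A_le σ hσ)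
    rwa [ENNReal.toReal_ofReal (by norm_num : (0:ℝ) ≤ 4)] at this
  rw [costValue, tsum_neg]
  linarith

end UpperBound

/-- In the MDP of Example 5.1 with cost `c(x,a) = -1` for `x ≥ 1` and `c(0,a) = 0`, the
optimal value is `v*(1) = -4`, but the stationary strategy `φ(x) ≡ 2` achieves only
`v^φ(1) = -∑_{t=0}^∞ (1/2)^t = -2`. -/
theorem no_optimal_value_attained_by_phi2 :
    (⨅ σ : {σ : ℕ → List (ℕ × ℕ) → ℕ → ℝ // IsStrategy σ}, costValue σ.1 1) = -4
      ∧ costValue sigma2 1 = -∑' t : ℕ, (1/2 : ℝ)^t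
      ∧ costValue sigma2 1 = -2 := by
  have hstrat2 : IsStrategy sigma2 := sigma2_eq ▸ isStrategy_sigD d2 hd2
  have hne : Nonempty {σ : ℕ → List (ℕ × ℕ) → ℕ → ℝ // IsStrategy σ} := ⟨⟨sigma2, hstrat2⟩⟩
  refine ⟨?_, costValue_sigma2, costValue_sigma2'⟩
  have hbdd : BddBelow (Set.range
      (fun σ : {σ : ℕ → List (ℕ × ℕ) → ℕ → ℝ // IsStrategy σ} => costValue σ.1 1)) := by
    refine ⟨-4, ?_⟩
    rintro v ⟨σ, rfl⟩
    exact costValue_ge σ.1 σ.2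
  apply le_antisymm
  · have htend : Filter.Tendsto (fun N : ℕ => -4 + 2 * (1/2 : ℝ)^N)
        Filter.atTop (nhds (-4)) := by
      have h0 : Filter.Tendsto (fun N : ℕ => (1/2 : ℝ)^N) Filter.atTop (nhds 0) :=
        tendsto_pow_atTop_nhds_zero_of_lt_one (by norm_num) (by norm_num)
      have := Filter.Tendsto.const_add (-4 : ℝ) (h0.const_mul 2)
      simpa using this
    apply ge_of_tendsto' htend
    intro N
    have := ciInf_le hbdd
      (⟨sigD (dN N), isStrategy_sigD _ (hdN N)⟩ :
        {σ : ℕ → List (ℕ × ℕ) → ℕ → ℝ // IsStrategy σ})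
    rwa [costValue_dN N] at this
  · exact le_ciInf fun σ => costValue_ge σ.1 σ.2
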